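/- arXiv:1012.4058 — 5 statements merged into one kernel-verified Lean document; each statement's English description precedes it below -/
import Mathlib

section
/- Let f : ℕ → ℚ satisfy f(1) = 0, and for every k ≥ 1, f(2k) = f(2k−1) + 3(3k² − 5k + 2) and f(2k+1) = f(2k) + 3(3k² − 2k). Then for every k ≥ 0, f(2k+1) = (3/2)(4k³ − k² − k), and for every k ≥ 1, f(2k) = (3/2)(4k³ − 7k² + 3k). -/
/-- the sequence `f` (number of convex pentagons in an `n`-triangular
net with vertices on both of two fixed sides) defined by the interleaved
first-order recurrences has the stated closed forms. -/
theorem pentagon_f_closed_form (f : ℕ → ℚ)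
    (h1 : f 1 = 0)
    (heven : ∀ k : ℕ, 1 ≤ k →
      f (2 * k) = f (2 * k - 1) + 3 * (3 * (k : ℚ) ^ 2 - 5 * k + 2))
    (hodd : ∀ k : ℕ, 1 ≤ k →
      f (2 * k + 1) = f (2 * k) + 3 * (3 * (k : ℚ) ^ 2 - 2 * k)) :
    (∀ k : ℕ, f (2 * k + 1) = 3 / 2 * (4 * (k : ℚ) ^ 3 - k ^ 2 - k)) ∧
    (∀ k : ℕ, 1 ≤ k → f (2 * k) = 3 / 2 * (4 * (k : ℚ) ^ 3 - 7 * k ^ 2 + 3 * k)) := by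
  have ho : ∀ k : ℕ, f (2 * k + 1) = 3 / 2 * (4 * (k : ℚ) ^ 3 - k ^ 2 - k) := by
    intro k
    induction k with
    | zero => simpa using h1
    | succ n ih =>
      have he := heven (n + 1) (by omega)
      have hsub : 2 * (n + 1) - 1 = 2 * n + 1 := by omega
      rw [hsub, ih] at he
      have h := hodd (n + 1) (by omega)
      rw [he] at h
      rw [h]
      push_cast
      ring
  refine ⟨ho, fun k hk => ?_⟩
  obtain ⟨m, rfl⟩ : ∃ m, k = m + 1 := ⟨k - 1, by omega⟩
  have he := heven (m + 1) (by omega)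
  have hsub : 2 * (m + 1) - 1 = 2 * m + 1 := by omega
  rw [hsub, ho m] at he
  rw [he]
  push_cast
  ring
end

section
/- Let f : ℕ → ℚ be defined by f(2k+1) = (3/2)(4k³ − k² − k) for k ≥ 0 and f(2k) = (3/2)(4k³ − 7k² + 3k) for k ≥ 1, and let P : ℕ → ℚ satisfy P(1) = 0, P(2) = 0, and P(n) = 2P(n−1) − P(n−2) + f(n) for all n ≥ 3. Then for every k ≥ 1, P(2k+1) − P(2k) = 3k⁴ + 2k³ − (3/2)k² − (1/2)k and P(2k) − P(2k−1) = 3k⁴ − 4k³ + k. -/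
/-- with the closed-form inhomogeneous term `f`, the pentagon-counting
sequence `P` satisfying `P n = 2 P (n-1) - P (n-2) + f n` has the stated
consecutive differences. -/
theorem pentagon_P_differences (f P : ℕ → ℚ)
    (hf_odd : ∀ k : ℕ, f (2 * k + 1) = 3 / 2 * (4 * (k : ℚ) ^ 3 - k ^ 2 - k))
    (hf_even : ∀ k : ℕ, 1 ≤ k → f (2 * k) = 3 / 2 * (4 * (k : ℚ) ^ 3 - 7 * k ^ 2 + 3 * k))
    (hP1 : P 1 = 0) (hP2 : P 2 = 0)
    (hPrec : ∀ n : ℕ, 3 ≤ n → P n = 2 * P (n - 1) - P (n - 2) + f n) :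
    (∀ k : ℕ, 1 ≤ k →
      P (2 * k + 1) - P (2 * k) =
        3 * (k : ℚ) ^ 4 + 2 * k ^ 3 - 3 / 2 * k ^ 2 - 1 / 2 * k) ∧
    (∀ k : ℕ, 1 ≤ k →
      P (2 * k) - P (2 * k - 1) = 3 * (k : ℚ) ^ 4 - 4 * k ^ 3 + k) := by
  have key : ∀ k : ℕ, 1 ≤ k →
      (P (2 * k) - P (2 * k - 1) = 3 * (k : ℚ) ^ 4 - 4 * k ^ 3 + k) ∧
      (P (2 * k + 1) - P (2 * k) =
        3 * (k : ℚ) ^ 4 + 2 * k ^ 3 - 3 / 2 * k ^ 2 - 1 / 2 * k) := by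
    intro k hk
    induction k with
    | zero => omega
    | succ n ih =>
      rcases Nat.lt_or_ge n 1 with h1 | h1
      · have hn : n = 0 := by omega
        subst hn
        have hB : P (2 * 1) - P (2 * 1 - 1) = (0 : ℚ) := by
          norm_num [hP1, hP2]
        constructor
        · rw [hB]; norm_num
        · have hr := hPrec 3 (by norm_num)
          have hf3 := hf_odd 1
          norm_num at hr hf3 ⊢
          rw [hr, hf3, hP1, hP2]; norm_num
      · obtain ⟨ihB, ihA⟩ := ih h1
        have e1 : 2 * (n + 1) = 2 * n + 2 := by ring
        have e2 : 2 * (n + 1) - 1 = 2 * n + 1 := by omega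
        have hrB := hPrec (2 * n + 2) (by omega)
        have hfe := hf_even (n + 1) (by omega)
        rw [e1] at hfe
        have e3 : 2 * n + 2 - 1 = 2 * n + 1 := by omega
        have e4 : 2 * n + 2 - 2 = 2 * n := by omega
        rw [e3, e4, hfe] at hrB
        have hB : P (2 * n + 2) - P (2 * n + 1)
            = 3 * ((n : ℚ) + 1) ^ 4 - 4 * ((n : ℚ) + 1) ^ 3 + ((n : ℚ) + 1) := by
          rw [hrB]
          have : 2 * P (2 * n + 1) - P (2 * n) +
              3 / 2 * (4 * ((n : ℚ) + 1) ^ 3 - 7 * ((n : ℚ) + 1) ^ 2 + 3 * ((n : ℚ) + 1))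
              - P (2 * n + 1)
              = (P (2 * n + 1) - P (2 * n)) +
              3 / 2 * (4 * ((n : ℚ) + 1) ^ 3 - 7 * ((n : ℚ) + 1) ^ 2 + 3 * ((n : ℚ) + 1)) := by
            ring
          push_cast
          rw [this, ihA]; ring
        refine ⟨by rw [e1, e3]; push_cast at hB ⊢; linarith [hB], ?_⟩
        have hrA := hPrec (2 * n + 3) (by omega)
        have hfo := hf_odd (n + 1)
        have e5 : 2 * (n + 1) + 1 = 2 * n + 3 := by omega
        rw [e5] at hfo
        have e6 : 2 * n + 3 - 1 = 2 * n + 2 := by omega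
        have e7 : 2 * n + 3 - 2 = 2 * n + 1 := by omega
        rw [e6, e7, hfo] at hrA
        rw [e5, e1, hrA]
        push_cast at hB ⊢
        linarith [hB]
  exact ⟨fun k hk => (key k hk).2, fun k hk => (key k hk).1⟩
end

section
/- Let f : ℕ → ℚ be defined by f(2k+1) = (3/2)(4k³ − k² − k) for k ≥ 0 and f(2k) = (3/2)(4k³ − 7k² + 3k) for k ≥ 1, and let P : ℕ → ℚ satisfy P(1) = 0, P(2) = 0, and P(n) = 2P(n−1) − P(n−2) + f(n) for all n ≥ 3. Then for every k ≥ 0, P(2k+1) = (6/5)k⁵ + (5/2)k⁴ + (1/2)k³ − k² − (1/5)k, and for every k ≥ 1, P(2k) = (6/5)k⁵ − (1/2)k⁴ − (3/2)k³ + (1/2)k² + (3/10)k. -/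
/-- with the closed-form inhomogeneous term `f`, the pentagon-counting
sequence `P` satisfying `P n = 2 P (n-1) - P (n-2) + f n`, `P 1 = P 2 = 0`, has the
stated closed forms. -/
theorem pentagon_P_closed_form (f P : ℕ → ℚ)
    (hf_odd : ∀ k : ℕ, f (2 * k + 1) = 3 / 2 * (4 * (k : ℚ) ^ 3 - k ^ 2 - k))
    (hf_even : ∀ k : ℕ, 1 ≤ k → f (2 * k) = 3 / 2 * (4 * (k : ℚ) ^ 3 - 7 * k ^ 2 + 3 * k))
    (hP1 : P 1 = 0) (hP2 : P 2 = 0)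
    (hPrec : ∀ n : ℕ, 3 ≤ n → P n = 2 * P (n - 1) - P (n - 2) + f n) :
    (∀ k : ℕ, P (2 * k + 1) =
      6 / 5 * (k : ℚ) ^ 5 + 5 / 2 * k ^ 4 + 1 / 2 * k ^ 3 - k ^ 2 - 1 / 5 * k) ∧
    (∀ k : ℕ, 1 ≤ k → P (2 * k) =
      6 / 5 * (k : ℚ) ^ 5 - 1 / 2 * k ^ 4 - 3 / 2 * k ^ 3 + 1 / 2 * k ^ 2 + 3 / 10 * k) := by
  have key : ∀ k : ℕ,
      (P (2 * k + 1) =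
        6 / 5 * (k : ℚ) ^ 5 + 5 / 2 * k ^ 4 + 1 / 2 * k ^ 3 - k ^ 2 - 1 / 5 * k) ∧
      (P (2 * (k + 1)) =
        6 / 5 * ((k : ℚ) + 1) ^ 5 - 1 / 2 * ((k : ℚ) + 1) ^ 4 - 3 / 2 * ((k : ℚ) + 1) ^ 3
          + 1 / 2 * ((k : ℚ) + 1) ^ 2 + 3 / 10 * ((k : ℚ) + 1)) := by
    intro k
    induction k with
    | zero =>
      constructor
      · simpa using hP1
      · norm_num
        simpa using hP2
    | succ k ih =>
      obtain ⟨h1, h2⟩ := ih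
      have hodd : P (2 * (k + 1) + 1) = 2 * P (2 * (k + 1)) - P (2 * k + 1)
          + f (2 * (k + 1) + 1) := by
        have := hPrec (2 * (k + 1) + 1) (by omega)
        convert this using 5 <;> omega
      have heven : P (2 * (k + 2)) = 2 * P (2 * (k + 1) + 1) - P (2 * (k + 1))
          + f (2 * (k + 2)) := by
        have := hPrec (2 * (k + 2)) (by omega)
        convert this using 5 <;> omega
      have hf1 := hf_odd (k + 1)
      have hf2 := hf_even (k + 2) (by omega)
      constructor
      · rw [hodd, h1, h2, hf1]
        push_cast
        ring
      · rw [heven, hodd, h1, h2, hf1, hf2]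
        push_cast
        ring
  constructor
  · intro k
    exact (key k).1
  · intro k hk
    obtain ⟨j, rfl⟩ : ∃ j, k = j + 1 := ⟨k - 1, by omega⟩
    have := (key j).2
    push_cast
    push_cast at this
    linarith
end

section
/- Let g : ℕ → ℚ be defined by g(2k) = (1/2)k(k−1)(2k² − 2k + 1) for k ≥ 1 and g(2k+1) = k⁴ for k ≥ 0, and let H : ℕ → ℚ satisfy H(1) = 0, H(2) = 0, and H(n) = 2H(n−1) − H(n−2) + g(n) for all n ≥ 3. Then for every k ≥ 1, H(2k) − H(2k−1) = (k/30)(12k⁴ − 15k³ + 5k² − 2) and H(2k+1) − H(2k) = (k/30)(12k⁴ + 15k³ + 5k² − 2). -/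
/-- with the closed-form inhomogeneous term `g`, the hexagon-counting
sequence `H` satisfying `H n = 2 H (n-1) - H (n-2) + g n` has the stated
consecutive differences. -/
theorem hexagon_H_differences (g H : ℕ → ℚ)
    (hg_even : ∀ k : ℕ, 1 ≤ k →
      g (2 * k) = 1 / 2 * (k : ℚ) * ((k : ℚ) - 1) * (2 * (k : ℚ) ^ 2 - 2 * k + 1))
    (hg_odd : ∀ k : ℕ, g (2 * k + 1) = (k : ℚ) ^ 4)
    (hH1 : H 1 = 0) (hH2 : H 2 = 0)
    (hHrec : ∀ n : ℕ, 3 ≤ n → H n = 2 * H (n - 1) - H (n - 2) + g n) :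
    (∀ k : ℕ, 1 ≤ k →
      H (2 * k) - H (2 * k - 1) =
        (k : ℚ) / 30 * (12 * (k : ℚ) ^ 4 - 15 * k ^ 3 + 5 * k ^ 2 - 2)) ∧
    (∀ k : ℕ, 1 ≤ k →
      H (2 * k + 1) - H (2 * k) =
        (k : ℚ) / 30 * (12 * (k : ℚ) ^ 4 + 15 * k ^ 3 + 5 * k ^ 2 - 2)) := by
  have key : ∀ k : ℕ, 1 ≤ k →
      (H (2 * k) - H (2 * k - 1) =
        (k : ℚ) / 30 * (12 * (k : ℚ) ^ 4 - 15 * k ^ 3 + 5 * k ^ 2 - 2)) ∧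
      (H (2 * k + 1) - H (2 * k) =
        (k : ℚ) / 30 * (12 * (k : ℚ) ^ 4 + 15 * k ^ 3 + 5 * k ^ 2 - 2)) := by
    intro k hk
    induction k with
    | zero => omega
    | succ n ih =>
      rcases Nat.lt_or_ge n 1 with h | h
      · -- n = 0 : base case k = 1
        have hn : n = 0 := by omega
        subst hn
        have h3 : H 3 = 2 * H 2 - H 1 + g 3 := hHrec 3 le_rfl
        have hg3 : g 3 = 1 := by
          have := hg_odd 1; norm_num at this; exact this
        constructor
        · show H 2 - H 1 = _
          rw [hH1, hH2]; norm_num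
        · show H 3 - H 2 = _
          rw [h3, hH1, hH2, hg3]; norm_num
      · -- n ≥ 1 : inductive step
        obtain ⟨ihE, ihO⟩ := ih h
        have h2n1 : 2 * n + 1 = 2 * (n + 1) - 1 := by omega
        have hE : H (2 * (n + 1)) - H (2 * (n + 1) - 1)
            = H (2 * n + 1) - H (2 * n) + g (2 * (n + 1)) := by
          have hr := hHrec (2 * (n + 1)) (by omega)
          have e1 : 2 * (n + 1) - 1 = 2 * n + 1 := by omega
          have e2 : 2 * (n + 1) - 2 = 2 * n := by omega
          rw [e1, e2] at hr
          rw [e1, hr]; ring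
        have hO : H (2 * (n + 1) + 1) - H (2 * (n + 1))
            = H (2 * (n + 1)) - H (2 * (n + 1) - 1) + g (2 * (n + 1) + 1) := by
          have hr := hHrec (2 * (n + 1) + 1) (by omega)
          have e1 : 2 * (n + 1) + 1 - 1 = 2 * (n + 1) := by omega
          have e2 : 2 * (n + 1) + 1 - 2 = 2 * (n + 1) - 1 := by omega
          rw [e1, e2] at hr
          rw [hr]; ring
        have hge := hg_even (n + 1) (by omega)
        have hgo := hg_odd (n + 1)
        constructor
        · rw [hE, ihO, hge]
          push_cast
          ring
        · rw [hO, hE, ihO, hge, hgo]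
          push_cast
          ring
  exact ⟨fun k hk => (key k hk).1, fun k hk => (key k hk).2⟩
end

section
/- Let g : ℕ → ℚ be defined by g(2k) = (1/2)k(k−1)(2k² − 2k + 1) for k ≥ 1 and g(2k+1) = k⁴ for k ≥ 0, and let H : ℕ → ℚ satisfy H(1) = 0, H(2) = 0, and H(n) = 2H(n−1) − H(n−2) + g(n) for all n ≥ 3. Then for every k ≥ 0, H(2k+1) = (1/60)(8k⁶ + 24k⁵ + 25k⁴ + 10k³ − 3k² − 4k), and for every k ≥ 1, H(2k) = (1/60)(8k⁶ − 5k⁴ − 3k²). -/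
/-- with the closed-form inhomogeneous term `g`, the hexagon-counting
sequence `H` satisfying `H n = 2 H (n-1) - H (n-2) + g n`, `H 1 = H 2 = 0`, has the
stated closed forms. -/
theorem hexagon_H_closed_form (g H : ℕ → ℚ)
    (hg_even : ∀ k : ℕ, 1 ≤ k →
      g (2 * k) = 1 / 2 * (k : ℚ) * ((k : ℚ) - 1) * (2 * (k : ℚ) ^ 2 - 2 * k + 1))
    (hg_odd : ∀ k : ℕ, g (2 * k + 1) = (k : ℚ) ^ 4)
    (hH1 : H 1 = 0) (hH2 : H 2 = 0)
    (hHrec : ∀ n : ℕ, 3 ≤ n → H n = 2 * H (n - 1) - H (n - 2) + g n) :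
    (∀ k : ℕ, H (2 * k + 1) = 1 / 60 *
      (8 * (k : ℚ) ^ 6 + 24 * k ^ 5 + 25 * k ^ 4 + 10 * k ^ 3 - 3 * k ^ 2 - 4 * k)) ∧
    (∀ k : ℕ, 1 ≤ k → H (2 * k) = 1 / 60 *
      (8 * (k : ℚ) ^ 6 - 5 * k ^ 4 - 3 * k ^ 2)) := by
  have key : ∀ k : ℕ, (H (2 * k + 1) = 1 / 60 *
      (8 * (k : ℚ) ^ 6 + 24 * k ^ 5 + 25 * k ^ 4 + 10 * k ^ 3 - 3 * k ^ 2 - 4 * k)) ∧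
      (H (2 * (k + 1)) = 1 / 60 *
      (8 * ((k : ℚ) + 1) ^ 6 - 5 * ((k : ℚ) + 1) ^ 4 - 3 * ((k : ℚ) + 1) ^ 2)) := by
    intro k
    induction k with
    | zero =>
      constructor
      · simpa using hH1
      · norm_num; simpa using hH2
    | succ n ih =>
      obtain ⟨h1, h2⟩ := ih
      have hodd : H (2 * (n + 1) + 1) = 2 * H (2 * (n + 1)) - H (2 * n + 1)
          + g (2 * (n + 1) + 1) := by
        have := hHrec (2 * (n + 1) + 1) (by omega)
        convert this using 5 <;> omega
      have heven : H (2 * (n + 2)) = 2 * H (2 * (n + 1) + 1) - H (2 * (n + 1))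
          + g (2 * (n + 2)) := by
        have := hHrec (2 * (n + 2)) (by omega)
        convert this using 5 <;> omega
      have hg1 := hg_odd (n + 1)
      have hg2 := hg_even (n + 2) (by omega)
      constructor
      · rw [hodd, h2, h1, hg1]
        push_cast
        ring
      · rw [heven, hodd, h2, h1, hg1, hg2]
        push_cast
        ring
  constructor
  · exact fun k => (key k).1
  · intro k hk
    obtain ⟨m, rfl⟩ : ∃ m, k = m + 1 := ⟨k - 1, by omega⟩
    have := (key m).2
    push_cast at this ⊢
    convert this using 2 <;> push_cast <;> ring
end
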